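/- For every C₁ > 0 there exists C₂ > 0 such that the following holds. Let M ≥ 1, 0 < r ≤ 1, and let (u_k)_{k∈ℕ} be nonnegative reals with Σ_{k≥0} u_k ≤ π r² and u_k ≤ C₁ e^{−k/M} r^{1+1/M} for every k ∈ ℕ. Then (1/(π r²)) Σ_{k≥0} u_k (1 + ln((k + 2 − ln r)/(1 − ln r))) ≤ C₂ (1 + ln(1 + M)). -/

import Mathlib

open Real

set_option maxHeartbeats 1000000 in
/-- summation estimate for the Whitney pieces. -/
theorem whitney_summation_estimate :
    ∀ C₁ > (0:ℝ), ∃ C₂ > (0:ℝ), ∀ M ≥ (1:ℝ), ∀ r : ℝ, 0 < r → r ≤ 1 →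
      ∀ u : ℕ → ℝ, (∀ k, 0 ≤ u k) → (∑' k, u k) ≤ π * r ^ 2 →
        (∀ k : ℕ, u k ≤ C₁ * Real.exp (-(k : ℝ) / M) * r ^ (1 + 1 / M)) →
        (1 / (π * r ^ 2)) *
            ∑' k : ℕ, u k * (1 + Real.log (((k : ℝ) + 2 - Real.log r) / (1 - Real.log r))) ≤
          C₂ * (1 + Real.log (1 + M)) := by
  intro C₁ hC₁
  refine ⟨8 * (1 + C₁), by positivity, ?_⟩
  intro M hM r hr hr1 u hu hsum hub
  have hM0 : (0:ℝ) < M := lt_of_lt_of_le one_pos hM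
  have hlr : Real.log r ≤ 0 := Real.log_nonpos hr.le hr1
  have hL1 : (1:ℝ) ≤ 1 - Real.log r := by linarith
  have hL0 : (0:ℝ) < 1 - Real.log r := by linarith
  have hlogM : 0 ≤ Real.log (M + 1) := Real.log_nonneg (by linarith)
  have hrp : (0:ℝ) < r ^ (1 + 1 / M) := Real.rpow_pos_of_pos hr _
  set T : ℝ := 2 * M * ((1 - Real.log r) + 2 * Real.log (M + 1)) with hTdef
  set A : ℝ := 1 + Real.log (2 * M + 4 * M * Real.log (M + 1) + 2) with hAdef
  set w : ℕ → ℝ := fun k => 1 + Real.log (((k : ℝ) + 2 - Real.log r) / (1 - Real.log r)) with hwdef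
  -- basic facts about w
  have hargpos : ∀ k : ℕ, (1:ℝ) ≤ ((k : ℝ) + 2 - Real.log r) / (1 - Real.log r) := by
    intro k
    rw [le_div_iff₀ hL0]
    have : (0:ℝ) ≤ (k:ℝ) := Nat.cast_nonneg k
    linarith
  have hw1 : ∀ k, (1:ℝ) ≤ w k := by
    intro k
    have := Real.log_nonneg (hargpos k)
    simp only [hwdef]
    linarith
  have hwlin : ∀ k, w k ≤ (k : ℝ) + 2 := by
    intro k
    have hx0 : (0:ℝ) < ((k : ℝ) + 2 - Real.log r) / (1 - Real.log r) :=
      lt_of_lt_of_le one_pos (hargpos k)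
    have h1 := Real.log_le_sub_one_of_pos hx0
    have h2 : ((k : ℝ) + 2 - Real.log r) / (1 - Real.log r) ≤ (k : ℝ) + 2 := by
      rw [div_le_iff₀ hL0]
      have : (0:ℝ) ≤ (k:ℝ) := Nat.cast_nonneg k
      nlinarith
    simp only [hwdef]
    linarith
  have hwA : ∀ k : ℕ, (k : ℝ) ≤ T → w k ≤ A := by
    intro k hk
    have hx0 : (0:ℝ) < ((k : ℝ) + 2 - Real.log r) / (1 - Real.log r) :=
      lt_of_lt_of_le one_pos (hargpos k)
    have h2 : ((k : ℝ) + 2 - Real.log r) / (1 - Real.log r) ≤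
        2 * M + 4 * M * Real.log (M + 1) + 2 := by
      rw [div_le_iff₀ hL0]
      rw [hTdef] at hk
      have hLlog : Real.log (M + 1) ≤ Real.log (M + 1) * (1 - Real.log r) := by nlinarith
      nlinarith
    have := Real.log_le_log hx0 h2
    simp only [hwdef, hAdef]
    linarith
  have hA1 : (1:ℝ) ≤ A := by
    have : (0:ℝ) ≤ Real.log (2 * M + 4 * M * Real.log (M + 1) + 2) :=
      Real.log_nonneg (by nlinarith)
    rw [hAdef]; linarith
  -- the tail sequence
  set b : ℕ → ℝ := fun k =>
    if (k : ℝ) ≤ T then 0 else C₁ * Real.exp (-(k : ℝ) / M) * r ^ (1 + 1 / M) * ((k : ℝ) + 2)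
    with hbdef
  have hb0 : ∀ k, 0 ≤ b k := by
    intro k
    simp only [hbdef]
    split
    · exact le_refl 0
    · positivity
  have hpoint : ∀ k, u k * w k ≤ A * u k + b k := by
    intro k
    by_cases hk : (k : ℝ) ≤ T
    · have h1 : u k * w k ≤ u k * A := mul_le_mul_of_nonneg_left (hwA k hk) (hu k)
      simp only [hbdef, if_pos hk]
      linarith
    · have h1 : u k * w k ≤ (C₁ * Real.exp (-(k : ℝ) / M) * r ^ (1 + 1 / M)) * ((k : ℝ) + 2) := by
        apply mul_le_mul (hub k) (hwlin k) (le_trans zero_le_one (hw1 k))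
        positivity
      have h2 : 0 ≤ A * u k := mul_nonneg (le_trans zero_le_one hA1) (hu k)
      simp only [hbdef, if_neg hk]
      exact h1.trans (le_add_of_nonneg_left h2)
  -- geometric quantities
  set q : ℝ := Real.exp (-(1 / (2 * M))) with hqdef
  have hq0 : 0 < q := Real.exp_pos _
  have hq1 : q < 1 := by
    rw [hqdef, Real.exp_lt_one_iff]
    have : (0:ℝ) < 1 / (2 * M) := by positivity
    linarith
  have hqpow : ∀ k : ℕ, q ^ k = Real.exp (-(k : ℝ) / (2 * M)) := by
    intro k
    rw [hqdef, ← Real.exp_nat_mul]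
    congr 1
    field_simp
  have h1q : 1 / (4 * M) ≤ 1 - q := by
    have hx : (0:ℝ) < 1 / (2 * M) := by positivity
    have he : 1 + 1 / (2 * M) ≤ Real.exp (1 / (2 * M)) := by
      have := Real.add_one_le_exp (1 / (2 * M)); linarith
    have hq' : q ≤ 1 / (1 + 1 / (2 * M)) := by
      rw [hqdef, Real.exp_neg, inv_eq_one_div]
      exact one_div_le_one_div_of_le (by positivity) he
    have h2 : 1 / (1 + 1 / (2 * M)) ≤ 1 - 1 / (4 * M) := by
      rw [div_le_iff₀ (by positivity)]
      have hx1 : 1 / (2 * M) ≤ 1 := by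
        rw [div_le_one (by linarith)]; linarith
      have hu0 : (0:ℝ) < 1 / (4 * M) := by positivity
      have huv : (2:ℝ) * (1 / (4 * M)) = 1 / (2 * M) := by
        field_simp; ring
      nlinarith [huv, mul_le_mul_of_nonneg_left hx1 hu0.le, hu0, hx]
    calc 1 / (4 * M) = 1 - (1 - 1 / (4 * M)) := by ring
    _ ≤ 1 - 1 / (1 + 1 / (2 * M)) := by linarith
    _ ≤ 1 - q := by linarith
  have hq2 : 0 < 1 - q := lt_of_lt_of_le (by positivity) h1q
  -- geometric sums
  have hqn : ‖q‖ < 1 := by rw [Real.norm_eq_abs, abs_of_pos hq0]; exact hq1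
  have h1s : Summable (fun k : ℕ => (k : ℝ) * q ^ k) := by
    have := summable_pow_mul_geometric_of_norm_lt_one (R := ℝ) 1 hqn
    simpa using this
  have h2s : Summable (fun k : ℕ => 2 * q ^ k) :=
    (summable_geometric_of_lt_one hq0.le hq1).mul_left 2
  have hgeo_sum : Summable (fun k : ℕ => ((k : ℝ) + 2) * q ^ k) := by
    have := h1s.add h2s
    convert this using 2 with k
    ring
  have hgeo_val : (∑' k : ℕ, ((k : ℝ) + 2) * q ^ k) ≤ 24 * M ^ 2 := by
    have hsplit : (∑' k : ℕ, ((k : ℝ) + 2) * q ^ k)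
        = (∑' k : ℕ, (k : ℝ) * q ^ k) + ∑' k : ℕ, 2 * q ^ k := by
      rw [← Summable.tsum_add h1s h2s]
      congr 1 with k
      ring
    have e1 : (∑' k : ℕ, (k : ℝ) * q ^ k) = q / (1 - q) ^ 2 :=
      tsum_coe_mul_geometric_of_norm_lt_one hqn
    have e2 : (∑' k : ℕ, 2 * q ^ k) = 2 * (1 - q)⁻¹ := by
      rw [tsum_mul_left, tsum_geometric_of_lt_one hq0.le hq1]
    have b1 : q / (1 - q) ^ 2 ≤ 16 * M ^ 2 := by
      rw [div_le_iff₀ (by positivity)]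
      have key1 : 16 * M ^ 2 * (1 / (4 * M) * (1 / (4 * M))) = 1 := by
        field_simp; ring
      have key2 : 16 * M ^ 2 * (1 / (4 * M) * (1 / (4 * M)))
          ≤ 16 * M ^ 2 * ((1 - q) * (1 - q)) :=
        mul_le_mul_of_nonneg_left (mul_le_mul h1q h1q (by positivity) hq2.le) (by positivity)
      nlinarith [key1, key2, hq1.le]
    have b2 : 2 * (1 - q)⁻¹ ≤ 8 * M := by
      rw [mul_inv_le_iff₀ hq2]
      have h4e : (4 * M) * (1 / (4 * M)) = 1 := by field_simp
      have h' : 1 ≤ (4 * M) * (1 - q) := by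
        have := mul_le_mul_of_nonneg_left h1q (show (0:ℝ) ≤ 4 * M by linarith)
        linarith [h4e]
      nlinarith [h']
    rw [hsplit, e1, e2]
    nlinarith
  -- bound on b
  set E : ℝ := C₁ * r ^ (1 + 1 / M) * Real.exp (-(T / (2 * M))) with hEdef
  have hE0 : 0 ≤ E := by positivity
  have hb_le : ∀ k, b k ≤ E * (((k : ℝ) + 2) * q ^ k) := by
    intro k
    simp only [hbdef]
    split
    · positivity
    · rename_i hk
      push_neg at hk
      have hsplitexp : Real.exp (-(k : ℝ) / M)
          = Real.exp (-(k : ℝ) / (2 * M)) * Real.exp (-(k : ℝ) / (2 * M)) := by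
        rw [← Real.exp_add]
        congr 1
        field_simp
        ring
      have hmono : Real.exp (-(k : ℝ) / (2 * M)) ≤ Real.exp (-(T / (2 * M))) := by
        apply Real.exp_le_exp.mpr
        rw [← neg_div]
        apply div_le_div_of_nonneg_right ?_ (by positivity) |>.trans_eq rfl
        · linarith
      calc C₁ * Real.exp (-(k : ℝ) / M) * r ^ (1 + 1 / M) * ((k : ℝ) + 2)
          = (C₁ * r ^ (1 + 1 / M) * ((k : ℝ) + 2) * Real.exp (-(k : ℝ) / (2 * M)))
            * Real.exp (-(k : ℝ) / (2 * M)) := by rw [hsplitexp]; ring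
        _ ≤ (C₁ * r ^ (1 + 1 / M) * ((k : ℝ) + 2) * Real.exp (-(k : ℝ) / (2 * M)))
            * Real.exp (-(T / (2 * M))) := by
            apply mul_le_mul_of_nonneg_left hmono
            positivity
        _ = E * (((k : ℝ) + 2) * q ^ k) := by rw [hEdef, hqpow k]; ring
  have hb_sum : Summable b := Summable.of_nonneg_of_le hb0 hb_le (hgeo_sum.mul_left E)
  -- summability of u and u*w
  have hq1M : Real.exp (-(1 / M)) < 1 := by
    rw [Real.exp_lt_one_iff]
    have : (0:ℝ) < 1 / M := by positivity
    linarith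
  have hu_le : ∀ k, u k ≤ (C₁ * r ^ (1 + 1 / M)) * Real.exp (-(1 / M)) ^ k := by
    intro k
    have h : Real.exp (-(1 / M)) ^ k = Real.exp (-(k : ℝ) / M) := by
      rw [← Real.exp_nat_mul]
      congr 1
      field_simp
    rw [h]
    calc u k ≤ C₁ * Real.exp (-(k : ℝ) / M) * r ^ (1 + 1 / M) := hub k
      _ = C₁ * r ^ (1 + 1 / M) * Real.exp (-(k : ℝ) / M) := by ring
  have hu_sum : Summable u :=
    Summable.of_nonneg_of_le hu hu_le
      ((summable_geometric_of_lt_one (Real.exp_pos _).le hq1M).mul_left _)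
  have hAb_sum : Summable (fun k => A * u k + b k) := (hu_sum.mul_left A).add hb_sum
  have huw_sum : Summable (fun k => u k * w k) :=
    Summable.of_nonneg_of_le
      (fun k => mul_nonneg (hu k) (le_trans zero_le_one (hw1 k))) hpoint hAb_sum
  -- value of exp(-(T/(2M)))
  have hexpT : Real.exp (-(T / (2 * M))) = r * Real.exp (-1) * ((M + 1) ^ 2)⁻¹ := by
    have hTe : T / (2 * M) = (1 - Real.log r) + 2 * Real.log (M + 1) := by
      rw [hTdef]; field_simp
    rw [hTe, neg_add, Real.exp_add]
    congr 1
    · rw [show -(1 - Real.log r) = Real.log r + (-1) by ring, Real.exp_add, Real.exp_log hr]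
    · rw [Real.exp_neg]
      congr 1
      rw [show (2:ℝ) * Real.log (M + 1) = ((2:ℕ):ℝ) * Real.log (M + 1) by norm_num,
        ← Real.log_pow, Real.exp_log (by positivity)]
  have hE24 : E * (24 * M ^ 2) ≤ 24 * C₁ * r ^ 2 := by
    have h1 : r ^ (1 + 1 / M) ≤ r := by
      nth_rewrite 2 [← Real.rpow_one r]
      apply Real.rpow_le_rpow_of_exponent_ge hr hr1
      have : (0:ℝ) ≤ 1 / M := by positivity
      linarith
    have h2 : Real.exp (-(1:ℝ)) ≤ 1 := by
      rw [Real.exp_le_one_iff]; norm_num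
    have h3 : ((M + 1) ^ 2)⁻¹ * M ^ 2 ≤ 1 := by
      rw [inv_mul_le_iff₀ (by positivity)]
      nlinarith
    have key : E * (24 * M ^ 2)
        = (24 * C₁) * (r ^ (1 + 1 / M)) * (r * Real.exp (-1)) * (((M + 1) ^ 2)⁻¹ * M ^ 2) := by
      rw [hEdef, hexpT]; ring
    rw [key]
    calc (24 * C₁) * (r ^ (1 + 1 / M)) * (r * Real.exp (-1)) * (((M + 1) ^ 2)⁻¹ * M ^ 2)
        ≤ (24 * C₁) * (r ^ (1 + 1 / M)) * (r * Real.exp (-1)) * 1 := by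
          apply mul_le_mul_of_nonneg_left h3
          positivity
      _ = (24 * C₁ * r) * (r ^ (1 + 1 / M)) * Real.exp (-1) := by ring
      _ ≤ (24 * C₁ * r) * r * Real.exp (-1) := by
          apply mul_le_mul_of_nonneg_right
          · apply mul_le_mul_of_nonneg_left h1 (by positivity)
          · positivity
      _ ≤ (24 * C₁ * r) * r * 1 := by
          apply mul_le_mul_of_nonneg_left h2 (by positivity)
      _ = 24 * C₁ * r ^ 2 := by ring
  -- main sum estimate
  have hS : (∑' k, u k * w k) ≤ A * (π * r ^ 2) + 24 * C₁ * r ^ 2 := by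
    calc (∑' k, u k * w k) ≤ ∑' k, (A * u k + b k) := Summable.tsum_le_tsum hpoint huw_sum hAb_sum
      _ = A * (∑' k, u k) + ∑' k, b k := by
          rw [Summable.tsum_add (hu_sum.mul_left A) hb_sum, tsum_mul_left]
      _ ≤ A * (π * r ^ 2) + E * (24 * M ^ 2) := by
          apply add_le_add
          · exact mul_le_mul_of_nonneg_left hsum (le_trans zero_le_one hA1)
          · calc (∑' k, b k) ≤ ∑' k : ℕ, E * (((k : ℝ) + 2) * q ^ k) :=
                Summable.tsum_le_tsum hb_le hb_sum (hgeo_sum.mul_left E)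
              _ = E * ∑' k : ℕ, ((k : ℝ) + 2) * q ^ k := tsum_mul_left
              _ ≤ E * (24 * M ^ 2) := mul_le_mul_of_nonneg_left hgeo_val hE0
      _ ≤ A * (π * r ^ 2) + 24 * C₁ * r ^ 2 := by linarith
  -- conclude
  have hπ : (0:ℝ) < π := Real.pi_pos
  have hπ3 : (3:ℝ) ≤ π := le_of_lt Real.pi_gt_three
  have hfin : (1 / (π * r ^ 2)) * (∑' k, u k * w k) ≤ A + 24 * C₁ / π := by
    have h := mul_le_mul_of_nonneg_left hS (show (0:ℝ) ≤ 1 / (π * r ^ 2) by positivity)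
    have heq : (1 / (π * r ^ 2)) * (A * (π * r ^ 2) + 24 * C₁ * r ^ 2) = A + 24 * C₁ / π := by
      field_simp
    linarith [h, heq.le, heq.ge]
  have hAbound : A ≤ 4 + 2 * Real.log (1 + M) := by
    have hlogle : Real.log (M + 1) ≤ M := by
      have := Real.log_le_sub_one_of_pos (show (0:ℝ) < M + 1 by linarith)
      linarith
    have hB : 2 * M + 4 * M * Real.log (M + 1) + 2 ≤ 8 * (1 + M) ^ 2 := by nlinarith
    have h1 : Real.log (2 * M + 4 * M * Real.log (M + 1) + 2) ≤ Real.log (8 * (1 + M) ^ 2) :=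
      Real.log_le_log (by nlinarith) hB
    have h2 : Real.log (8 * (1 + M) ^ 2) = Real.log 8 + 2 * Real.log (1 + M) := by
      rw [Real.log_mul (by norm_num) (by positivity), Real.log_pow]
      norm_num
    have h3 : Real.log 8 < 3 := by
      have := Real.log_two_lt_d9
      rw [show (8:ℝ) = 2 ^ 3 by norm_num, Real.log_pow]
      push_cast
      linarith
    rw [hAdef]
    linarith
  have hgoal : A + 24 * C₁ / π ≤ 8 * (1 + C₁) * (1 + Real.log (1 + M)) := by
    have hlog1M : 0 ≤ Real.log (1 + M) := Real.log_nonneg (by linarith)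
    have hdiv : 24 * C₁ / π ≤ 8 * C₁ := by
      rw [div_le_iff₀ hπ]
      nlinarith
    nlinarith
  calc (1 / (π * r ^ 2)) *
      ∑' k : ℕ, u k * (1 + Real.log (((k : ℝ) + 2 - Real.log r) / (1 - Real.log r)))
      = (1 / (π * r ^ 2)) * (∑' k, u k * w k) := rfl
    _ ≤ A + 24 * C₁ / π := hfin
    _ ≤ 8 * (1 + C₁) * (1 + Real.log (1 + M)) := hgoal
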